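/- Let m ≥ 1 and for n ∈ ℕ set c_n = 1 − 2^{−n} and d_n = 1 − (3/4)·2^{−n}. Define H(t) = 3^{−mn} for t ∈ [c_n, d_n] and H(1) = 0 on K = {1} ∪ ∪_{n=0}^∞ [c_n, d_n]. Then c_{n+1} − d_n = 2^{−(n+2)} → 0 as n → ∞, while (H(d_n) − H(c_{n+1}))/(c_{n+1} − d_n)^{2m} = ((3^m − 1)·16^m/3^m)·(4/3)^{mn} → ∞ as n → ∞. In particular, there is no δ > 0 such that |H(b) − H(a)| ≤ (b−a)^{2m} for all a, b ∈ K with 0 < b − a < δ. -/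

import Mathlib

open Set Filter

/-- computation in Proposition 4.1: for the example jet `H`, the gaps
`c_{n+1} - d_n = 2^{-(n+2)}` tend to `0` while the quotients
`(H(d_n) - H(c_{n+1}))/(c_{n+1} - d_n)^{2m}` blow up; in particular the area-velocity
condition fails for the triple `(0, 0, H)`. -/
theorem example_quotient_blows_up (m : ℕ) (hm : 1 ≤ m)
    (c d : ℕ → ℝ)
    (hc : ∀ n, c n = 1 - (1 / 2 : ℝ) ^ n)
    (hd : ∀ n, d n = 1 - (3 / 4) * (1 / 2 : ℝ) ^ n)
    (K : Set ℝ) (hKdef : K = {1} ∪ ⋃ n : ℕ, Icc (c n) (d n))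
    (H : ℝ → ℝ)
    (hH0 : ∀ n : ℕ, ∀ t ∈ Icc (c n) (d n), H t = (1 / 3 : ℝ) ^ (m * n))
    (hH1 : H 1 = 0) :
    (∀ n, c (n + 1) - d n = (1 / 2 : ℝ) ^ (n + 2)) ∧
    Tendsto (fun n => c (n + 1) - d n) atTop (nhds 0) ∧
    (∀ n, (H (d n) - H (c (n + 1))) / (c (n + 1) - d n) ^ (2 * m) =
      (((3 : ℝ) ^ m - 1) * 16 ^ m / 3 ^ m) * (4 / 3 : ℝ) ^ (m * n)) ∧
    Tendsto (fun n => (H (d n) - H (c (n + 1))) / (c (n + 1) - d n) ^ (2 * m)) atTop atTop ∧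
    ¬ ∃ δ > (0 : ℝ), ∀ a ∈ K, ∀ b ∈ K, 0 < b - a → b - a < δ →
        |H b - H a| ≤ (b - a) ^ (2 * m) := by
  have hm0 : m ≠ 0 := Nat.one_le_iff_ne_zero.mp hm
  have hcd : ∀ n, c n ≤ d n := by
    intro n
    rw [hc n, hd n]
    have hx : (0:ℝ) ≤ (1/2:ℝ)^n := by positivity
    nlinarith
  have part1 : ∀ n, c (n+1) - d n = (1/2:ℝ)^(n+2) := by
    intro n; rw [hc, hd]; ring
  have part2 : Tendsto (fun n => c (n+1) - d n) atTop (nhds 0) := by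
    simp only [part1]
    have := (tendsto_pow_atTop_nhds_zero_of_lt_one (by norm_num : (0:ℝ) ≤ 1/2)
      (by norm_num)).comp (tendsto_add_atTop_nat 2)
    exact this
  have hdK : ∀ n, d n ∈ Icc (c n) (d n) := fun n => ⟨hcd n, le_refl _⟩
  have hcK : ∀ n, c n ∈ Icc (c n) (d n) := fun n => ⟨le_refl _, hcd n⟩
  set p := (1/3:ℝ)^m with hp'
  set q := (1/4:ℝ)^m with hq'
  have hp : 0 < p := by positivity
  have hq : 0 < q := by positivity
  have hp1 : p < 1 := pow_lt_one₀ (by norm_num) (by norm_num) hm0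
  have hHd : ∀ n, H (d n) = p ^ n := by
    intro n; rw [hH0 n (d n) (hdK n), hp', ← pow_mul]
  have hHc : ∀ n, H (c (n+1)) = p ^ n * p := by
    intro n; rw [hH0 (n+1) _ (hcK (n+1)), hp', Nat.mul_succ, pow_add, pow_mul]
  have hden : ∀ n, ((1/2:ℝ)^(n+2))^(2*m) = q^n * q^2 := by
    intro n
    rw [← pow_mul, mul_comm (n+2) (2*m), pow_mul]
    have h2 : ((1/2:ℝ))^(2*m) = q := by
      rw [pow_mul, hq']; norm_num
    rw [h2, pow_add]
  have x3 : (0:ℝ) < (3:ℝ)^m := by positivity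
  have x4 : (0:ℝ) < (4:ℝ)^m := by positivity
  have part3 : ∀ n, (H (d n) - H (c (n + 1))) / (c (n + 1) - d n) ^ (2 * m) =
      (((3 : ℝ) ^ m - 1) * 16 ^ m / 3 ^ m) * (4 / 3 : ℝ) ^ (m * n) := by
    intro n
    rw [hHd n, hHc n, part1 n, hden n, hp', hq']
    have e1 : (1/3:ℝ)^m = ((3:ℝ)^m)⁻¹ := by rw [← inv_pow]; norm_num
    have e2 : (1/4:ℝ)^m = ((4:ℝ)^m)⁻¹ := by rw [← inv_pow]; norm_num
    have e3 : (16:ℝ)^m = ((4:ℝ)^m)^2 := by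
      rw [← pow_mul, mul_comm m 2, pow_mul]; norm_num
    have e4 : (4/3:ℝ)^(m*n) = ((4:ℝ)^m)^n * (((3:ℝ)^m)^n)⁻¹ := by
      rw [pow_mul, div_pow, div_pow, div_eq_mul_inv]
    rw [e1, e2, e3, e4]
    have h3n : ((3:ℝ)^m)^n ≠ 0 := by positivity
    have h4n : ((4:ℝ)^m)^n ≠ 0 := by positivity
    field_simp
    have h3 : (1 / (3:ℝ)^m)^n * ((3:ℝ)^m)^n = 1 := by
      rw [← mul_pow, one_div, inv_mul_cancel₀ (by positivity), one_pow]
    have h4 : (1 / (4:ℝ)^m)^n * ((4:ℝ)^m)^n = 1 := by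
      rw [← mul_pow, one_div, inv_mul_cancel₀ (by positivity), one_pow]
    linear_combination ((3:ℝ)^m - 1) * h3 - ((3:ℝ)^m - 1) * h4
  have Cpos : (0:ℝ) < ((3:ℝ)^m - 1) * 16^m / 3^m := by
    have h1 : (1:ℝ) < (3:ℝ)^m := one_lt_pow₀ (by norm_num) hm0
    have h16 : (0:ℝ) < (16:ℝ)^m := by positivity
    exact div_pos (mul_pos (by linarith) h16) x3
  have part4 : Tendsto (fun n => (H (d n) - H (c (n + 1))) / (c (n + 1) - d n) ^ (2 * m))
      atTop atTop := by
    simp only [part3]; simp only [pow_mul]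
    have hr : (1:ℝ) < (4/3:ℝ)^m := one_lt_pow₀ (by norm_num) hm0
    exact Tendsto.const_mul_atTop Cpos (tendsto_pow_atTop_atTop_of_one_lt hr)
  refine ⟨part1, part2, part3, part4, ?_⟩
  rintro ⟨δ, hδ, hb⟩
  obtain ⟨n, hn1, hn2⟩ :=
    ((part4.eventually_gt_atTop 1).and (part2.eventually_lt_const hδ)).exists
  have haK : d n ∈ K := by rw [hKdef]; exact Or.inr (mem_iUnion.2 ⟨n, hdK n⟩)
  have hbK : c (n+1) ∈ K := by rw [hKdef]; exact Or.inr (mem_iUnion.2 ⟨n+1, hcK (n+1)⟩)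
  have hgap : 0 < c (n+1) - d n := by rw [part1]; positivity
  have hle := hb (d n) haK (c (n+1)) hbK hgap hn2
  have habs : |H (c (n+1)) - H (d n)| = H (d n) - H (c (n+1)) := by
    rw [abs_sub_comm, abs_of_nonneg]
    rw [hHd, hHc]
    nlinarith [pow_pos hp n]
  have hle1 : (H (d n) - H (c (n+1))) / (c (n+1) - d n)^(2*m) ≤ 1 := by
    rw [div_le_one (by positivity)]
    calc H (d n) - H (c (n+1)) = |H (c (n+1)) - H (d n)| := habs.symm
      _ ≤ (c (n+1) - d n)^(2*m) := hle
  linarith
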